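/- Let X ~ N(0,T) with T > 0 and σ > 0, μ, ρ ∈ ℝ, a = (ρ - μ + σ²/2)T/σ. Then E[𝟙{X ≤ a} e^{ρT} + 𝟙{X > a} exp((μ - σ²/2)T + σX)] = (1/2)(1 + erf((σ²+2ρ-2μ)√T/(2√2σ)))e^{ρT} + (1/2)(1 + erf((σ²-2ρ+2μ)√T/(2√2σ)))e^{μT}. -/

import Mathlib

open MeasureTheory ProbabilityTheory Real

noncomputable def erf (x : ℝ) : ℝ := (2 / Real.sqrt π) * ∫ t in (0:ℝ)..x, Real.exp (-t ^ 2)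

open Set
open scoped NNReal ENNReal

namespace RVAux

lemma erf_neg (x : ℝ) : erf (-x) = - erf x := by
  unfold erf
  have h : ∫ t in (0:ℝ)..(-x), Real.exp (-t ^ 2)
      = - ∫ t in (0:ℝ)..x, Real.exp (-t ^ 2) := by
    rw [intervalIntegral.integral_symm]
    congr 1
    have := intervalIntegral.integral_comp_neg (a := (0:ℝ)) (b := x)
      (fun t => Real.exp (-t ^ 2))
    simpa using this.symm
  rw [h]; ring

lemma interval_erf (v u : ℝ) (hv : 0 < v) :
    ∫ t in (0:ℝ)..u, Real.exp (-t ^ 2 / (2 * v))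
      = Real.sqrt (2 * v) * (Real.sqrt π / 2) * erf (u / Real.sqrt (2 * v)) := by
  have h2v : (0:ℝ) < 2 * v := by linarith
  have hs : (0:ℝ) < Real.sqrt (2 * v) := Real.sqrt_pos.2 h2v
  have hsq : Real.sqrt (2 * v) ^ 2 = 2 * v := Real.sq_sqrt h2v.le
  have h1 : ∀ x : ℝ, Real.exp (-x ^ 2 / (2 * v))
      = Real.exp (-(x / Real.sqrt (2 * v)) ^ 2) := by
    intro x
    congr 1
    rw [div_pow, hsq]
    ring
  simp_rw [h1]
  rw [intervalIntegral.integral_comp_div (fun t => Real.exp (-t ^ 2)) hs.ne']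
  have hπ : Real.sqrt π ≠ 0 := by positivity
  unfold erf
  rw [zero_div]
  field_simp
  ring

lemma integrable_g (v b : ℝ) (hv : 0 < v) :
    Integrable (fun x => Real.exp (-(x - b) ^ 2 / (2 * v))) := by
  have hvle : (0:ℝ) ≤ v := hv.le
  have hvn : ((Real.toNNReal v : ℝ≥0) : ℝ) = v := Real.coe_toNNReal v hvle
  have hne : Real.sqrt (2 * π * v) ≠ 0 := by positivity
  have h := (ProbabilityTheory.integrable_gaussianPDFReal b v.toNNReal).const_mul
      (Real.sqrt (2 * π * v))
  refine h.congr (Filter.Eventually.of_forall fun x => ?_)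
  unfold ProbabilityTheory.gaussianPDFReal
  rw [hvn]
  simp only []
  rw [← mul_assoc, mul_inv_cancel₀ hne, one_mul]

lemma integrable_g0 (v : ℝ) (hv : 0 < v) :
    Integrable (fun x => Real.exp (-x ^ 2 / (2 * v))) := by
  simpa using integrable_g v 0 hv

lemma total0 (v : ℝ) (hv : 0 < v) :
    ∫ x : ℝ, Real.exp (-x ^ 2 / (2 * v)) = Real.sqrt (2 * π * v) := by
  have h : ∀ x : ℝ, Real.exp (-x ^ 2 / (2 * v)) = Real.exp (-(2 * v)⁻¹ * x ^ 2) := by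
    intro x; congr 1; field_simp
  simp_rw [h]
  rw [integral_gaussian]
  congr 1
  rw [div_inv_eq_mul]
  ring

lemma half0 (v : ℝ) (hv : 0 < v) :
    ∫ x in Iic (0:ℝ), Real.exp (-x ^ 2 / (2 * v)) = Real.sqrt (2 * π * v) / 2 := by
  have hint := integrable_g0 v hv
  have hsym : ∫ x in Iic (0:ℝ), Real.exp (-x ^ 2 / (2 * v))
      = ∫ x in Ioi (0:ℝ), Real.exp (-x ^ 2 / (2 * v)) := by
    have := integral_comp_neg_Iic (0:ℝ)
      (fun x => Real.exp (-x ^ 2 / (2 * v)))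
    simpa using this
  have htot := intervalIntegral.integral_Iic_add_Ioi (b := (0:ℝ))
    hint.integrableOn hint.integrableOn
  rw [total0 v hv] at htot
  linarith [hsym, htot]

lemma shift_Iic (v b c : ℝ) :
    ∫ x in Iic c, Real.exp (-(x - b) ^ 2 / (2 * v))
      = ∫ x in Iic (c - b), Real.exp (-x ^ 2 / (2 * v)) := by
  have A : MeasurableEmbedding (fun x : ℝ => x + -b) :=
    (Homeomorph.addRight (-b)).measurableEmbedding
  have h := A.setIntegral_map (μ := volume)
    (g := fun x => Real.exp (-x ^ 2 / (2 * v))) (s := Iic (c - b))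
  rw [map_add_right_eq_self volume (-b)] at h
  simp_rw [← sub_eq_add_neg] at h
  have hpre : (fun x : ℝ => x - b) ⁻¹' Iic (c - b) = Iic c := by
    ext x
    simp only [mem_preimage, mem_Iic]
    constructor <;> intro hx <;> linarith
  rw [hpre] at h
  exact h.symm

lemma Iic_eval (v b c : ℝ) (hv : 0 < v) :
    ∫ x in Iic c, Real.exp (-(x - b) ^ 2 / (2 * v))
      = Real.sqrt (2 * π * v) / 2 * (1 + erf ((c - b) / Real.sqrt (2 * v))) := by
  have hint := integrable_g0 v hv
  have hkey := intervalIntegral.integral_Iic_sub_Iic (μ := volume)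
    (f := fun x => Real.exp (-x ^ 2 / (2 * v)))
    (a := (0:ℝ)) (b := c - b) hint.integrableOn hint.integrableOn
  rw [half0 v hv, interval_erf v (c - b) hv] at hkey
  rw [shift_Iic v b c]
  have hsp : Real.sqrt (2 * v) * Real.sqrt π = Real.sqrt (2 * π * v) := by
    rw [← Real.sqrt_mul (by linarith) π]
    congr 1
    ring
  have : ∫ x in Iic (c - b), Real.exp (-x ^ 2 / (2 * v))
      = Real.sqrt (2 * π * v) / 2
        + Real.sqrt (2 * v) * (Real.sqrt π / 2) * erf ((c - b) / Real.sqrt (2 * v)) := by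
    linarith [hkey]
  rw [this]
  rw [← hsp]
  ring

lemma total_g (v b : ℝ) (hv : 0 < v) :
    ∫ x : ℝ, Real.exp (-(x - b) ^ 2 / (2 * v)) = Real.sqrt (2 * π * v) := by
  have h := MeasureTheory.integral_sub_right_eq_self
    (μ := volume) (fun x : ℝ => Real.exp (-x ^ 2 / (2 * v))) b
  rw [h]
  exact total0 v hv

lemma Ioi_eval (v b c : ℝ) (hv : 0 < v) :
    ∫ x in Ioi c, Real.exp (-(x - b) ^ 2 / (2 * v))
      = Real.sqrt (2 * π * v) / 2 * (1 + erf ((b - c) / Real.sqrt (2 * v))) := by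
  have hint := (integrable_g v b hv)
  have htot := intervalIntegral.integral_Iic_add_Ioi (b := c)
    hint.integrableOn hint.integrableOn
  rw [total_g v b hv, Iic_eval v b c hv] at htot
  have hneg : (b - c) / Real.sqrt (2 * v) = -((c - b) / Real.sqrt (2 * v)) := by ring
  rw [hneg, erf_neg]
  linarith [htot]

end RVAux

theorem rv_insider_expected_wealth (T σ μ ρ : ℝ) (hT : 0 < T) (hσ : 0 < σ)
    (a : ℝ) (ha : a = (ρ - μ + σ ^ 2 / 2) * T / σ) :
    ∫ x, (if x ≤ a then Real.exp (ρ * T) else Real.exp ((μ - σ ^ 2 / 2) * T + σ * x))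
        ∂(gaussianReal 0 T.toNNReal)
      = (1 / 2) * (1 + erf ((σ ^ 2 + 2 * ρ - 2 * μ) * Real.sqrt T / (2 * Real.sqrt 2 * σ)))
          * Real.exp (ρ * T)
        + (1 / 2) * (1 + erf ((σ ^ 2 - 2 * ρ + 2 * μ) * Real.sqrt T / (2 * Real.sqrt 2 * σ)))
          * Real.exp (μ * T) := by
  have hTle : (0:ℝ) ≤ T := hT.le
  have hvn : ((T.toNNReal : ℝ≥0) : ℝ) = T := Real.coe_toNNReal T hTle
  have hvn0 : T.toNNReal ≠ 0 := (Real.toNNReal_pos.2 hT).ne'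
  set K : ℝ := (Real.sqrt (2 * π * T))⁻¹ with hK
  have hS : (0:ℝ) < Real.sqrt (2 * π * T) := Real.sqrt_pos.2 (by positivity)
  rw [gaussianReal_of_var_ne_zero 0 hvn0]
  rw [show (gaussianPDF 0 T.toNNReal)
      = fun x => ((Real.toNNReal (gaussianPDFReal 0 T.toNNReal x) : ℝ≥0) : ℝ≥0∞) from rfl]
  rw [integral_withDensity_eq_integral_smul
    ((measurable_gaussianPDFReal 0 T.toNNReal).real_toNNReal)]
  have hpdf : ∀ x : ℝ, (Real.toNNReal (gaussianPDFReal 0 T.toNNReal x) : ℝ)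
      = K * Real.exp (-(x - 0) ^ 2 / (2 * T)) := by
    intro x
    rw [Real.coe_toNNReal _ (gaussianPDFReal_nonneg 0 T.toNNReal x)]
    unfold gaussianPDFReal
    rw [hvn]
  have hpoint : ∀ x : ℝ,
      ((Real.toNNReal (gaussianPDFReal 0 T.toNNReal x) : ℝ≥0)
        • (if x ≤ a then Real.exp (ρ * T) else Real.exp ((μ - σ ^ 2 / 2) * T + σ * x)))
      = if x ≤ a then Real.exp (ρ * T) * (K * Real.exp (-(x - 0) ^ 2 / (2 * T)))
        else Real.exp (μ * T) * (K * Real.exp (-(x - σ * T) ^ 2 / (2 * T))) := by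
    intro x
    rw [NNReal.smul_def, smul_eq_mul, hpdf x, mul_ite]
    by_cases hx : x ≤ a
    · rw [if_pos hx, if_pos hx]; ring
    · rw [if_neg hx, if_neg hx]
      have hexp : Real.exp ((μ - σ ^ 2 / 2) * T + σ * x) * Real.exp (-(x - 0) ^ 2 / (2 * T))
          = Real.exp (μ * T) * Real.exp (-(x - σ * T) ^ 2 / (2 * T)) := by
        rw [← Real.exp_add, ← Real.exp_add, Real.exp_eq_exp]
        field_simp
        ring
      linear_combination K * hexp
  simp_rw [hpoint]
  have hintIic : IntegrableOn (fun x : ℝ =>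
      if x ≤ a then Real.exp (ρ * T) * (K * Real.exp (-(x - 0) ^ 2 / (2 * T)))
      else Real.exp (μ * T) * (K * Real.exp (-(x - σ * T) ^ 2 / (2 * T)))) (Iic a) := by
    refine (((RVAux.integrable_g T 0 hT).const_mul K).const_mul
      (Real.exp (ρ * T))).integrableOn.congr_fun ?_ measurableSet_Iic
    intro x hx
    simp only [mem_Iic] at hx
    simp only [if_pos hx]
  have hintIoi : IntegrableOn (fun x : ℝ =>
      if x ≤ a then Real.exp (ρ * T) * (K * Real.exp (-(x - 0) ^ 2 / (2 * T)))
      else Real.exp (μ * T) * (K * Real.exp (-(x - σ * T) ^ 2 / (2 * T)))) (Ioi a) := by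
    refine (((RVAux.integrable_g T (σ * T) hT).const_mul K).const_mul
      (Real.exp (μ * T))).integrableOn.congr_fun ?_ measurableSet_Ioi
    intro x hx
    simp only [mem_Ioi] at hx
    simp only [if_neg (not_le.2 hx)]
  rw [← intervalIntegral.integral_Iic_add_Ioi hintIic hintIoi]
  have hIic : ∫ x in Iic a,
      (if x ≤ a then Real.exp (ρ * T) * (K * Real.exp (-(x - 0) ^ 2 / (2 * T)))
        else Real.exp (μ * T) * (K * Real.exp (-(x - σ * T) ^ 2 / (2 * T))))
      = Real.exp (ρ * T) * K
        * (Real.sqrt (2 * π * T) / 2 * (1 + erf ((a - 0) / Real.sqrt (2 * T)))) := by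
    rw [setIntegral_congr_fun measurableSet_Iic
      (g := fun x => Real.exp (ρ * T) * K * Real.exp (-(x - 0) ^ 2 / (2 * T)))
      (by intro x hx; simp only [mem_Iic] at hx; simp only [if_pos hx]; ring)]
    rw [integral_const_mul, RVAux.Iic_eval T 0 a hT]
  have hIoi : ∫ x in Ioi a,
      (if x ≤ a then Real.exp (ρ * T) * (K * Real.exp (-(x - 0) ^ 2 / (2 * T)))
        else Real.exp (μ * T) * (K * Real.exp (-(x - σ * T) ^ 2 / (2 * T))))
      = Real.exp (μ * T) * K
        * (Real.sqrt (2 * π * T) / 2 * (1 + erf ((σ * T - a) / Real.sqrt (2 * T)))) := by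
    rw [setIntegral_congr_fun measurableSet_Ioi
      (g := fun x => Real.exp (μ * T) * K * Real.exp (-(x - σ * T) ^ 2 / (2 * T)))
      (by intro x hx; simp only [mem_Ioi] at hx; simp only [if_neg (not_le.2 hx)]; ring)]
    rw [integral_const_mul, RVAux.Ioi_eval T (σ * T) a hT]
  rw [hIic, hIoi]
  have h2T : Real.sqrt (2 * T) = Real.sqrt 2 * Real.sqrt T := Real.sqrt_mul (by norm_num) T
  have hTT : Real.sqrt T * Real.sqrt T = T := Real.mul_self_sqrt hTle
  have hsT : Real.sqrt T ≠ 0 := by positivity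
  have hs2 : Real.sqrt 2 ≠ 0 := by positivity
  have harg1 : (a - 0) / Real.sqrt (2 * T)
      = (σ ^ 2 + 2 * ρ - 2 * μ) * Real.sqrt T / (2 * Real.sqrt 2 * σ) := by
    subst ha
    rw [sub_zero, h2T]
    field_simp
    linear_combination (-(σ ^ 2 + 2 * ρ - 2 * μ)) * hTT
  have harg2 : (σ * T - a) / Real.sqrt (2 * T)
      = (σ ^ 2 - 2 * ρ + 2 * μ) * Real.sqrt T / (2 * Real.sqrt 2 * σ) := by
    subst ha
    rw [h2T]
    field_simp
    linear_combination (-(σ ^ 2 - 2 * ρ + 2 * μ)) * hTT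
  rw [harg1, harg2]
  have hKS : K * Real.sqrt (2 * π * T) = 1 := inv_mul_cancel₀ hS.ne'
  set E1 := erf ((σ ^ 2 + 2 * ρ - 2 * μ) * Real.sqrt T / (2 * Real.sqrt 2 * σ))
  set E2 := erf ((σ ^ 2 - 2 * ρ + 2 * μ) * Real.sqrt T / (2 * Real.sqrt 2 * σ))
  linear_combination (Real.exp (ρ * T) * (1 + E1) / 2
    + Real.exp (μ * T) * (1 + E2) / 2) * hKS
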